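/- arXiv:quant-ph/0504060 — 6 statements merged into one kernel-verified Lean document; each statement's English description precedes it below -/
import Mathlib

section
/- Let H be a bounded self-adjoint operator on a complex Hilbert space 𝓗 and let P be an orthogonal projection on 𝓗. Then for every T > 0 the operators (P ∘ exp(−(it/n)H) ∘ P)^n converge in operator norm, as n → ∞, to exp(−it·(P∘H∘P)) ∘ P, uniformly for t in the compact interval [0, T]. -/
open scoped InnerProductSpace Topology

section Aux
variable {𝔸 : Type*} [NormedRing 𝔸] [NormOneClass 𝔸] [NormedAlgebra ℂ 𝔸] [CompleteSpace 𝔸]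

/-- Norm bound on the exponential. -/
lemma zenoAux_norm_exp_le (x : 𝔸) : ‖NormedSpace.exp x‖ ≤ Real.exp ‖x‖ := by
  have h := NormedSpace.exp_series_hasSum_exp' (𝕂 := ℂ) x
  have hr := NormedSpace.exp_series_hasSum_exp' (𝕂 := ℝ) (‖x‖)
  rw [← Real.exp_eq_exp_ℝ] at hr
  have key : ∀ n : ℕ, ‖((n.factorial : ℂ))⁻¹ • x ^ n‖ ≤ ((n.factorial : ℝ))⁻¹ • ‖x‖ ^ n := by
    intro n
    rw [norm_smul, norm_inv, Complex.norm_natCast, smul_eq_mul]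
    exact mul_le_mul_of_nonneg_left (norm_pow_le x n) (by positivity)
  rw [← h.tsum_eq]
  calc ‖∑' n : ℕ, ((n.factorial : ℂ))⁻¹ • x ^ n‖
      ≤ ∑' n : ℕ, ‖((n.factorial : ℂ))⁻¹ • x ^ n‖ := by
        apply norm_tsum_le_tsum_norm
        exact Summable.of_nonneg_of_le (fun n => norm_nonneg _) key hr.summable
    _ ≤ ∑' n : ℕ, ((n.factorial : ℝ))⁻¹ • ‖x‖ ^ n :=
        Summable.tsum_le_tsum key (Summable.of_nonneg_of_le (fun n => norm_nonneg _) key hr.summable)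
          hr.summable
    _ = Real.exp ‖x‖ := hr.tsum_eq

/-- Second order Taylor remainder bound for the exponential. -/
lemma zenoAux_exp_sub_one_sub_le (x : 𝔸) :
    ‖NormedSpace.exp x - 1 - x‖ ≤ ‖x‖ ^ 2 * Real.exp ‖x‖ := by
  have h := NormedSpace.exp_series_hasSum_exp' (𝕂 := ℂ) x
  have hr := NormedSpace.exp_series_hasSum_exp' (𝕂 := ℝ) (‖x‖)
  rw [← Real.exp_eq_exp_ℝ] at hr
  set f : ℕ → 𝔸 := fun n => ((n.factorial : ℂ))⁻¹ • x ^ n with hf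
  have hsum2 : ∑ i ∈ Finset.range 2, f i = 1 + x := by
    simp [hf, Finset.sum_range_succ, Nat.factorial]
  have h2 : HasSum (fun n => f (n + 2)) (NormedSpace.exp x - 1 - x) := by
    have := (hasSum_nat_add_iff' (f := f) 2 (g := NormedSpace.exp x)).2 h
    rwa [hsum2, sub_add_eq_sub_sub] at this
  have key : ∀ n : ℕ, ‖f (n + 2)‖ ≤ ‖x‖ ^ 2 * (((n.factorial : ℝ))⁻¹ • ‖x‖ ^ n) := by
    intro n
    rw [hf]
    simp only [norm_smul, norm_inv, Complex.norm_natCast, smul_eq_mul]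
    have h1 : ‖x ^ (n + 2)‖ ≤ ‖x‖ ^ (n + 2) := norm_pow_le x (n + 2)
    have h2 : ((n+2).factorial : ℝ)⁻¹ ≤ ((n.factorial : ℝ))⁻¹ := by
      apply inv_anti₀
      · positivity
      · exact_mod_cast Nat.factorial_le (by omega)
    calc (((n+2).factorial : ℝ))⁻¹ * ‖x ^ (n + 2)‖
        ≤ ((n.factorial : ℝ))⁻¹ * ‖x‖ ^ (n + 2) := by
          apply mul_le_mul h2 h1 (norm_nonneg _) (by positivity)
      _ = ‖x‖ ^ 2 * (((n.factorial : ℝ))⁻¹ * ‖x‖ ^ n) := by ring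
  have hsummable : Summable (fun n => ‖f (n + 2)‖) :=
    Summable.of_nonneg_of_le (fun n => norm_nonneg _) key ((hr.summable).mul_left (‖x‖ ^ 2))
  rw [← h2.tsum_eq]
  calc ‖∑' n : ℕ, f (n + 2)‖
      ≤ ∑' n : ℕ, ‖f (n + 2)‖ := norm_tsum_le_tsum_norm hsummable
    _ ≤ ∑' n : ℕ, ‖x‖ ^ 2 * (((n.factorial : ℝ))⁻¹ • ‖x‖ ^ n) :=
        Summable.tsum_le_tsum key hsummable ((hr.summable).mul_left (‖x‖ ^ 2))
    _ = ‖x‖ ^ 2 * Real.exp ‖x‖ := by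
        rw [tsum_mul_left, hr.tsum_eq]

/-- Telescoping bound for powers. -/
lemma zenoAux_pow_sub_pow (a b : 𝔸) {r : ℝ} (hr : 1 ≤ r) (ha : ‖a‖ ≤ r) (hb : ‖b‖ ≤ r) :
    ∀ n : ℕ, ‖a ^ n - b ^ n‖ ≤ n * r ^ n * ‖a - b‖ := by
  intro n
  induction n with
  | zero => simp
  | succ n ih =>
    have hd : a ^ (n + 1) - b ^ (n + 1) = a * (a ^ n - b ^ n) + (a - b) * b ^ n := by
      rw [pow_succ', pow_succ']; noncomm_ring
    rw [hd]
    have h1 : ‖a * (a ^ n - b ^ n)‖ ≤ r * (n * r ^ n * ‖a - b‖) := by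
      calc ‖a * (a ^ n - b ^ n)‖ ≤ ‖a‖ * ‖a ^ n - b ^ n‖ := norm_mul_le _ _
        _ ≤ r * (n * r ^ n * ‖a - b‖) := by
            apply mul_le_mul ha ih (norm_nonneg _) (by linarith)
    have h2 : ‖(a - b) * b ^ n‖ ≤ ‖a - b‖ * r ^ n := by
      calc ‖(a - b) * b ^ n‖ ≤ ‖a - b‖ * ‖b ^ n‖ := norm_mul_le _ _
        _ ≤ ‖a - b‖ * r ^ n := by
            apply mul_le_mul_of_nonneg_left _ (norm_nonneg _)
            exact (norm_pow_le b n).trans (pow_le_pow_left₀ (norm_nonneg b) hb n)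
    calc ‖a * (a ^ n - b ^ n) + (a - b) * b ^ n‖
        ≤ ‖a * (a ^ n - b ^ n)‖ + ‖(a - b) * b ^ n‖ := norm_add_le _ _
      _ ≤ r * (n * r ^ n * ‖a - b‖) + ‖a - b‖ * r ^ n := add_le_add h1 h2
      _ ≤ ((n : ℝ) + 1) * r ^ (n + 1) * ‖a - b‖ := by
          have h3 : r ^ n ≤ r ^ (n + 1) := pow_le_pow_right₀ hr (by omega)
          have h4 : (0:ℝ) ≤ ‖a - b‖ := norm_nonneg _
          have h5 : (0:ℝ) ≤ r ^ n := by positivity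
          have hrr : r * r ^ n = r ^ (n + 1) := (pow_succ' r n).symm
          have e1 : r * (↑n * r ^ n * ‖a - b‖) = ↑n * r ^ (n + 1) * ‖a - b‖ := by
            rw [← hrr]; ring
          have e2 : ‖a - b‖ * r ^ n ≤ ‖a - b‖ * r ^ (n + 1) :=
            mul_le_mul_of_nonneg_left h3 h4
          rw [e1]; linarith
      _ = (↑(n + 1)) * r ^ (n + 1) * ‖a - b‖ := by push_cast; ring

lemma zenoAux_idem_pow {𝔸 : Type*} [Monoid 𝔸] {P : 𝔸} (h : P * P = P) :
    ∀ m : ℕ, P ^ (m + 1) = P := by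
  intro m
  induction m with
  | zero => exact pow_one P
  | succ k ihk => rw [pow_succ, ihk, h]

end Aux

set_option maxHeartbeats 1000000

/-- **Zeno product formula, bounded case.** For a bounded self-adjoint operator `H`
and an orthogonal projection `P` on a complex Hilbert space, the products
`(P e^{-itH/n} P)^n` converge in operator norm to `e^{-it P H P} P`,
uniformly for `t` in a compact interval `[0, T]`. -/
theorem zeno_product_formula_bounded
    {𝓗 : Type*} [NormedAddCommGroup 𝓗] [InnerProductSpace ℂ 𝓗] [CompleteSpace 𝓗]
    (H P : 𝓗 →L[ℂ] 𝓗)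
    (hH : ∀ x y : 𝓗, ⟪H x, y⟫_ℂ = ⟪x, H y⟫_ℂ)
    (hPproj : P ∘L P = P)
    (hPsa : ∀ x y : 𝓗, ⟪P x, y⟫_ℂ = ⟪x, P y⟫_ℂ)
    (T : ℝ) (hT : 0 < T) :
    TendstoUniformlyOn
      (fun (n : ℕ) (t : ℝ) =>
        (P ∘L NormedSpace.exp ((-(Complex.I * (t / n))) • H) ∘L P) ^ n)
      (fun t : ℝ =>
        NormedSpace.exp ((-(Complex.I * t)) • (P ∘L H ∘L P)) ∘L P)
      Filter.atTop (Set.Icc 0 T) := by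
  rcases subsingleton_or_nontrivial 𝓗 with hsub | hnt
  · -- trivial Hilbert space
    have hss : Subsingleton (𝓗 →L[ℂ] 𝓗) := ⟨fun f g => by ext x; exact Subsingleton.elim _ _⟩
    rw [Metric.tendstoUniformlyOn_iff]
    intro ε hε
    filter_upwards with n t _
    have hzero : ∀ x y : 𝓗 →L[ℂ] 𝓗, dist x y = 0 := fun x y => by
      rw [Subsingleton.elim x y, dist_self]
    rw [hzero]
    exact hε
  · -- nontrivial case
    have hPP : P * P = P := hPproj
    set M : ℝ := ‖H‖ with hM
    have hM0 : 0 ≤ M := norm_nonneg _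
    -- P has norm at most one
    have hPle : ‖P‖ ≤ 1 := by
      refine P.opNorm_le_bound zero_le_one (fun x => ?_)
      have hfix : P (P x) = P x := by
        have := congrArg (fun Q : 𝓗 →L[ℂ] 𝓗 => Q x) hPproj
        simpa using this
      have h2 : ‖P x‖ ^ 2 ≤ ‖x‖ * ‖P x‖ := by
        have e1 : ⟪P x, P x⟫_ℂ = ⟪x, P x⟫_ℂ := by
          rw [hPsa x (P x), hfix]
        have e2 : ‖P x‖ ^ 2 = RCLike.re ⟪x, P x⟫_ℂ := by
          rw [← e1, inner_self_eq_norm_sq]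
        rw [e2]
        calc RCLike.re ⟪x, P x⟫_ℂ ≤ ‖⟪x, P x⟫_ℂ‖ := RCLike.re_le_norm _
          _ ≤ ‖x‖ * ‖P x‖ := norm_inner_le_norm x (P x)
      by_cases h0 : ‖P x‖ = 0
      · rw [h0]; positivity
      · have hpos : 0 < ‖P x‖ := lt_of_le_of_ne (norm_nonneg _) (Ne.symm h0)
        have h3 : ‖P x‖ * ‖P x‖ ≤ ‖x‖ * ‖P x‖ := by nlinarith
        have := le_of_mul_le_mul_right h3 hpos
        linarith
    set K : 𝓗 →L[ℂ] 𝓗 := P ∘L H ∘L P with hKdef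
    have hKmul : K = P * (H * P) := rfl
    have hPK : P * K = K := by
      rw [hKmul, ← mul_assoc, hPP]
    have hKP : K * P = K := by
      rw [hKmul, mul_assoc, mul_assoc, hPP]
    have hCommPK : Commute P K := by
      show P * K = K * P
      rw [hPK, hKP]
    have hKnorm : ‖K‖ ≤ M := by
      rw [hKmul]
      calc ‖P * (H * P)‖ ≤ ‖P‖ * ‖H * P‖ := norm_mul_le _ _
        _ ≤ 1 * ‖H * P‖ := mul_le_mul_of_nonneg_right hPle (norm_nonneg _)
        _ = ‖H * P‖ := one_mul _
        _ ≤ ‖H‖ * ‖P‖ := norm_mul_le _ _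
        _ ≤ ‖H‖ * 1 := mul_le_mul_of_nonneg_left hPle (norm_nonneg _)
        _ = M := by rw [hM, mul_one]
    set C : ℝ := 2 * T ^ 2 * M ^ 2 * Real.exp (2 * T * M) with hC
    have hC0 : 0 ≤ C := by positivity
    -- main quantitative estimate
    have main : ∀ n : ℕ, 1 ≤ n → ∀ t ∈ Set.Icc (0:ℝ) T,
        ‖(P ∘L NormedSpace.exp ((-(Complex.I * (t / n))) • H) ∘L P) ^ n -
          NormedSpace.exp ((-(Complex.I * t)) • K) ∘L P‖ ≤ C / n := by
      intro n hn t ht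
      obtain ⟨ht0, htT⟩ := ht
      have hn0 : (0:ℝ) < n := by exact_mod_cast hn
      have hnC : (n : ℂ) ≠ 0 := by
        exact_mod_cast Nat.cast_ne_zero.2 (by omega)
      set s : ℝ := t / n with hs
      have hs0 : 0 ≤ s := by positivity
      have hsTn : s ≤ T / n := by
        rw [hs]
        gcongr
      have hsT : s ≤ T := hsTn.trans (div_le_self hT.le (by exact_mod_cast hn))
      set c : ℂ := -(Complex.I * ((t : ℂ) / (n : ℂ))) with hc
      have hcnorm : ‖c‖ = s := by
        rw [hc]
        rw [norm_neg, norm_mul, Complex.norm_I, one_mul]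
        have : ((t : ℂ) / (n : ℂ)) = ((s : ℝ) : ℂ) := by
          rw [hs]; push_cast; ring
        rw [this, Complex.norm_real, Real.norm_eq_abs, abs_of_nonneg hs0]
      set X : 𝓗 →L[ℂ] 𝓗 := c • H with hX
      set Y : 𝓗 →L[ℂ] 𝓗 := c • K with hY
      have hXnorm : ‖X‖ ≤ s * M := by
        rw [hX, norm_smul, hcnorm]
      have hYnorm : ‖Y‖ ≤ s * M := by
        rw [hY, norm_smul, hcnorm]
        exact mul_le_mul_of_nonneg_left hKnorm hs0
      set E₁ : 𝓗 →L[ℂ] 𝓗 := NormedSpace.exp X with hE₁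
      set E₂ : 𝓗 →L[ℂ] 𝓗 := NormedSpace.exp Y with hE₂
      set a : 𝓗 →L[ℂ] 𝓗 := P * (E₁ * P) with ha
      set b : 𝓗 →L[ℂ] 𝓗 := P * (E₂ * P) with hb
      -- sandwiched first-order terms agree
      have hXPY : P * (X * P) = P * (Y * P) := by
        rw [hX, hY, smul_mul_assoc, smul_mul_assoc, mul_smul_comm, mul_smul_comm]
        congr 1
        rw [← hKmul, ← mul_assoc, hPK, hKP]
      have expand : ∀ Z W : 𝓗 →L[ℂ] 𝓗,
          P * ((Z - 1 - W) * P) = P * (Z * P) - P * P - P * (W * P) := by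
        intro Z W
        noncomm_ring
      have hab : a - b = P * ((E₁ - 1 - X) * P) - P * ((E₂ - 1 - Y) * P) := by
        rw [expand, expand, hXPY]
        abel
      have sandwich : ∀ Z : 𝓗 →L[ℂ] 𝓗, ‖P * (Z * P)‖ ≤ ‖Z‖ := by
        intro Z
        calc ‖P * (Z * P)‖ ≤ ‖P‖ * ‖Z * P‖ := norm_mul_le _ _
          _ ≤ 1 * ‖Z * P‖ := mul_le_mul_of_nonneg_right hPle (norm_nonneg _)
          _ = ‖Z * P‖ := one_mul _
          _ ≤ ‖Z‖ * ‖P‖ := norm_mul_le _ _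
          _ ≤ ‖Z‖ * 1 := mul_le_mul_of_nonneg_left hPle (norm_nonneg _)
          _ = ‖Z‖ := mul_one _
      have hrem : ∀ Z : 𝓗 →L[ℂ] 𝓗, ‖Z‖ ≤ s * M →
          ‖NormedSpace.exp Z - 1 - Z‖ ≤ (s * M) ^ 2 * Real.exp (s * M) := by
        intro Z hZ
        refine (zenoAux_exp_sub_one_sub_le Z).trans ?_
        have h1 : ‖Z‖ ^ 2 ≤ (s * M) ^ 2 := by
          apply pow_le_pow_left₀ (norm_nonneg _) hZ
        have h2 : Real.exp ‖Z‖ ≤ Real.exp (s * M) := Real.exp_le_exp.2 hZ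
        have := Real.exp_pos ‖Z‖
        nlinarith [sq_nonneg ‖Z‖]
      have hdiff : ‖a - b‖ ≤ 2 * (s * M) ^ 2 * Real.exp (s * M) := by
        rw [hab]
        calc ‖P * ((E₁ - 1 - X) * P) - P * ((E₂ - 1 - Y) * P)‖
            ≤ ‖P * ((E₁ - 1 - X) * P)‖ + ‖P * ((E₂ - 1 - Y) * P)‖ := norm_sub_le _ _
          _ ≤ ‖E₁ - 1 - X‖ + ‖E₂ - 1 - Y‖ := add_le_add (sandwich _) (sandwich _)
          _ ≤ (s * M) ^ 2 * Real.exp (s * M) + (s * M) ^ 2 * Real.exp (s * M) :=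
              add_le_add (hrem X hXnorm) (hrem Y hYnorm)
          _ = 2 * (s * M) ^ 2 * Real.exp (s * M) := by ring
      -- b is the compressed evolution
      have hCommPY : Commute P Y := (hCommPK).smul_right c
      have hCommPE₂ : Commute P E₂ := hCommPY.exp_right
      have hbeq : b = E₂ * P := by
        rw [hb, ← hCommPE₂.eq, ← mul_assoc, hPP]
      have hPpow : P ^ n = P := by
        obtain ⟨m, hm⟩ : ∃ m, n = m + 1 := ⟨n - 1, by omega⟩
        rw [hm, zenoAux_idem_pow hPP]
      have hbpow : b ^ n = NormedSpace.exp ((-(Complex.I * t)) • K) * P := by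
        letI : NormedAlgebra ℚ (𝓗 →L[ℂ] 𝓗) := NormedAlgebra.restrictScalars ℚ ℂ _
        rw [hbeq, hCommPE₂.symm.mul_pow, hPpow, ← NormedSpace.exp_nsmul]
        congr 2
        rw [hY, ← Nat.cast_smul_eq_nsmul ℂ, smul_smul, hc]
        congr 1
        field_simp
      -- norm bounds for the telescoping estimate
      set r : ℝ := Real.exp (T * M / n) with hr
      have hr1 : 1 ≤ r := Real.one_le_exp (by positivity)
      have hsMn : s * M ≤ T * M / n := by
        rw [hs, div_mul_eq_mul_div]
        gcongr
      have hexp_le : ∀ Z : 𝓗 →L[ℂ] 𝓗, ‖Z‖ ≤ s * M → ‖NormedSpace.exp Z‖ ≤ r := by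
        intro Z hZ
        refine (zenoAux_norm_exp_le Z).trans ?_
        rw [hr]
        exact Real.exp_le_exp.2 (hZ.trans hsMn)
      have hale : ‖a‖ ≤ r := by
        rw [ha]
        exact (sandwich E₁).trans (hexp_le X hXnorm)
      have hble : ‖b‖ ≤ r := by
        rw [hb]
        exact (sandwich E₂).trans (hexp_le Y hYnorm)
      have htel := zenoAux_pow_sub_pow a b hr1 hale hble n
      have hrn : r ^ n = Real.exp (T * M) := by
        rw [hr, ← Real.exp_nat_mul]
        congr 1
        field_simp
      -- assemble
      have hgoal_eq : (P ∘L NormedSpace.exp ((-(Complex.I * (t / n))) • H) ∘L P) ^ n -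
          NormedSpace.exp ((-(Complex.I * t)) • K) ∘L P = a ^ n - b ^ n := by
        rw [hbpow]
        rfl
      rw [hgoal_eq]
      have hsM0 : 0 ≤ s * M := by positivity
      have hexpTM : Real.exp (s * M) ≤ Real.exp (T * M) :=
        Real.exp_le_exp.2 (by nlinarith)
      calc ‖a ^ n - b ^ n‖ ≤ n * r ^ n * ‖a - b‖ := htel
        _ ≤ n * r ^ n * (2 * (s * M) ^ 2 * Real.exp (s * M)) := by
            apply mul_le_mul_of_nonneg_left hdiff (by positivity)
        _ ≤ n * Real.exp (T * M) * (2 * (T * M / n) ^ 2 * Real.exp (T * M)) := by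
            rw [hrn]
            apply mul_le_mul_of_nonneg_left ?_ (by positivity)
            have h1 : (s * M) ^ 2 ≤ (T * M / n) ^ 2 := by
              apply pow_le_pow_left₀ hsM0 hsMn
            have h2 := Real.exp_pos (s * M)
            have h3 := Real.exp_pos (T * M)
            nlinarith [sq_nonneg (T * M / n)]
        _ = C / n := by
            rw [hC, show (2:ℝ) * T * M = T * M + (T * M) by ring, Real.exp_add]
            field_simp
    -- conclude uniform convergence
    rw [Metric.tendstoUniformlyOn_iff]
    intro ε hε
    have htend := tendsto_const_div_atTop_nhds_zero_nat C
    have hev : ∀ᶠ n : ℕ in Filter.atTop, C / n < ε := htend.eventually_lt_const hε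
    filter_upwards [hev, Filter.eventually_ge_atTop 1] with n h1 h2 t ht
    rw [dist_eq_norm, norm_sub_rev]
    exact lt_of_le_of_lt (main n h2 t ht) h1
end

section
/- Let H be a bounded self-adjoint operator on a complex Hilbert space 𝓗 and let P be an orthogonal projection on 𝓗. Then for every real t, the operators (P ∘ exp(−(it/n)H))^n converge in operator norm, as n → ∞, to exp(−it·(P∘H∘P)) ∘ P. -/
open scoped InnerProductSpace Topology

open NormedSpace

section ZenoHelpers
variable {𝔸 : Type*} [NormedRing 𝔸] [NormedAlgebra ℂ 𝔸] [CompleteSpace 𝔸]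

/-- Second-order remainder bound for the exponential. -/
lemma zeno_exp_remainder (A : 𝔸) :
    ‖exp A - 1 - A‖ ≤ ‖A‖ ^ 2 * Real.exp ‖A‖ := by
  set f : ℕ → 𝔸 := fun n => ((n.factorial : ℂ))⁻¹ • A ^ n with hf
  have h : HasSum f (exp A) := NormedSpace.exp_series_hasSum_exp' (𝕂 := ℂ) A
  have hS : ∑ i ∈ Finset.range 2, f i = 1 + A := by
    simp [hf, Finset.sum_range_succ]
  have h2 : HasSum (fun n => f (n + 2)) (exp A - 1 - A) := by
    rw [hasSum_nat_add_iff 2, hS]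
    convert h using 1
    · rfl
    · abel
  have hbound : ∀ n : ℕ, ‖f (n + 2)‖ ≤ ‖A‖ ^ 2 * (‖A‖ ^ n / n.factorial) := by
    intro n
    have h1 : ‖f (n + 2)‖ ≤ (((n + 2).factorial : ℝ))⁻¹ * ‖A‖ ^ (n + 2) := by
      rw [hf]
      simp only [norm_smul, norm_inv, Complex.norm_natCast]
      gcongr
      exact norm_pow_le' A (by omega)
    have h3 : (((n + 2).factorial : ℝ))⁻¹ * ‖A‖ ^ (n + 2)
        ≤ ((n.factorial : ℝ))⁻¹ * (‖A‖ ^ n * ‖A‖ ^ 2) := by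
      rw [← pow_add]
      apply mul_le_mul_of_nonneg_right _ (by positivity)
      apply inv_anti₀
      · exact_mod_cast Nat.factorial_pos n
      · exact_mod_cast Nat.factorial_le (by omega)
    calc ‖f (n + 2)‖ ≤ ((n.factorial : ℝ))⁻¹ * (‖A‖ ^ n * ‖A‖ ^ 2) := le_trans h1 h3
      _ = ‖A‖ ^ 2 * (‖A‖ ^ n / n.factorial) := by ring
  have hgsum : Summable fun n : ℕ => ‖A‖ ^ 2 * (‖A‖ ^ n / n.factorial) :=
    (Real.summable_pow_div_factorial ‖A‖).mul_left _
  have hnsum : Summable fun n => ‖f (n + 2)‖ :=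
    Summable.of_nonneg_of_le (fun n => norm_nonneg _) hbound hgsum
  calc ‖exp A - 1 - A‖ = ‖∑' n, f (n + 2)‖ := by rw [h2.tsum_eq]
    _ ≤ ∑' n, ‖f (n + 2)‖ := norm_tsum_le_tsum_norm hnsum
    _ ≤ ∑' n : ℕ, ‖A‖ ^ 2 * (‖A‖ ^ n / n.factorial) := Summable.tsum_le_tsum hbound hnsum hgsum
    _ = ‖A‖ ^ 2 * Real.exp ‖A‖ := by
        rw [tsum_mul_left, Real.exp_eq_exp_ℝ, NormedSpace.exp_eq_tsum_div]

lemma zeno_norm_pow_le_one {a : 𝔸} (h1 : ‖(1 : 𝔸)‖ ≤ 1) (ha : ‖a‖ ≤ 1) (n : ℕ) :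
    ‖a ^ n‖ ≤ 1 := by
  induction n with
  | zero => simpa
  | succ k ih =>
    calc ‖a ^ (k + 1)‖ = ‖a ^ k * a‖ := by rw [pow_succ]
      _ ≤ ‖a ^ k‖ * ‖a‖ := norm_mul_le _ _
      _ ≤ 1 * 1 := mul_le_mul ih ha (norm_nonneg _) zero_le_one
      _ = 1 := one_mul 1

lemma zeno_pow_sub_pow {a b : 𝔸} (h1 : ‖(1 : 𝔸)‖ ≤ 1) (ha : ‖a‖ ≤ 1) (hb : ‖b‖ ≤ 1)
    (n : ℕ) : ‖a ^ n - b ^ n‖ ≤ n * ‖a - b‖ := by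
  induction n with
  | zero => simp
  | succ k ih =>
    have key : a ^ (k + 1) - b ^ (k + 1) = a * (a ^ k - b ^ k) + (a - b) * b ^ k := by
      rw [pow_succ', pow_succ', mul_sub, sub_mul]
      abel
    calc ‖a ^ (k + 1) - b ^ (k + 1)‖
        ≤ ‖a * (a ^ k - b ^ k)‖ + ‖(a - b) * b ^ k‖ := by rw [key]; exact norm_add_le _ _
      _ ≤ ‖a‖ * ‖a ^ k - b ^ k‖ + ‖a - b‖ * ‖b ^ k‖ := by
          gcongr <;> exact norm_mul_le _ _
      _ ≤ 1 * (k * ‖a - b‖) + ‖a - b‖ * 1 :=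
          add_le_add (mul_le_mul ha ih (norm_nonneg _) zero_le_one)
            (mul_le_mul_of_nonneg_left (zeno_norm_pow_le_one h1 hb k) (norm_nonneg _))
      _ = (k + 1 : ℕ) * ‖a - b‖ := by push_cast; ring

lemma zeno_struct {M : Type*} [Monoid M] {p x : M} (hp : p * p = p) (n : ℕ) :
    (p * x) ^ (n + 1) = (p * x * p) ^ n * (p * x) := by
  induction n with
  | zero => simp
  | succ k ih =>
    rw [pow_succ (p * x), ih, pow_succ, mul_assoc ((p * x * p) ^ k) (p * x) (p * x),
      mul_assoc ((p * x * p) ^ k) (p * x * p) (p * x)]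
    congr 1
    rw [mul_assoc (p * x) p (p * x), ← mul_assoc p p x, hp]

end ZenoHelpers

/-- exponential of a purely imaginary multiple of a self-adjoint operator has norm at most 1. -/
lemma zeno_norm_exp_le_one {𝓗 : Type*} [NormedAddCommGroup 𝓗] [InnerProductSpace ℂ 𝓗]
    [CompleteSpace 𝓗] (S : 𝓗 →L[ℂ] 𝓗) (hS : IsSelfAdjoint S) (z : ℂ) (hz : star z = -z) :
    ‖exp (z • S)‖ ≤ 1 := by
  letI : NormedAlgebra ℚ (𝓗 →L[ℂ] 𝓗) := NormedAlgebra.restrictScalars ℚ ℂ _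
  have hmem : z • S ∈ skewAdjoint (𝓗 →L[ℂ] 𝓗) :=
    IsSelfAdjoint.smul_mem_skewAdjoint (by rwa [skewAdjoint.mem_iff]) hS
  have hu := NormedSpace.exp_mem_unitary_of_mem_skewAdjoint hmem
  have h1 : star (exp (z • S)) * exp (z • S) = 1 := (Unitary.mem_iff.mp hu).1
  have h2 : ‖exp (z • S)‖ * ‖exp (z • S)‖ = ‖(1 : 𝓗 →L[ℂ] 𝓗)‖ := by
    rw [← CStarRing.norm_star_mul_self, h1]
  have h3 : ‖(1 : 𝓗 →L[ℂ] 𝓗)‖ ≤ 1 := by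
    rw [ContinuousLinearMap.one_def]; exact ContinuousLinearMap.norm_id_le
  nlinarith [norm_nonneg (exp (z • S))]

set_option maxHeartbeats 2000000 in
/-- **Non-symmetric Zeno product formula** (first version): for a bounded self-adjoint
operator `H` and an orthogonal projection `P`, `(P e^{-itH/n})^n → e^{-it P H P} P`
in operator norm as `n → ∞`. -/
theorem zeno_product_formula_nonsymmetric_left
    {𝓗 : Type*} [NormedAddCommGroup 𝓗] [InnerProductSpace ℂ 𝓗] [CompleteSpace 𝓗]
    (H P : 𝓗 →L[ℂ] 𝓗)
    (hH : ∀ x y : 𝓗, ⟪H x, y⟫_ℂ = ⟪x, H y⟫_ℂ)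
    (hPproj : P ∘L P = P)
    (hPsa : ∀ x y : 𝓗, ⟪P x, y⟫_ℂ = ⟪x, P y⟫_ℂ)
    (t : ℝ) :
    Filter.Tendsto
      (fun n : ℕ => (P ∘L NormedSpace.exp ((-(Complex.I * (t / n))) • H)) ^ n)
      Filter.atTop
      (𝓝 (NormedSpace.exp ((-(Complex.I * t)) • (P ∘L H ∘L P)) ∘L P)) := by
  have hPP : P * P = P := hPproj
  have hHsa : IsSelfAdjoint H :=
    ContinuousLinearMap.isSelfAdjoint_iff_isSymmetric.mpr fun x y => hH x y
  have hPsa' : IsSelfAdjoint P :=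
    ContinuousLinearMap.isSelfAdjoint_iff_isSymmetric.mpr fun x y => hPsa x y
  set B : 𝓗 →L[ℂ] 𝓗 := P ∘L H ∘L P with hBdef
  have hBmul : B = P * H * P := rfl
  have hBsa : IsSelfAdjoint B := by
    rw [IsSelfAdjoint, hBmul, star_mul, star_mul, hPsa'.star_eq, hHsa.star_eq, mul_assoc]
  have hPB : P * B = B := by rw [hBmul, ← mul_assoc, ← mul_assoc, hPP]
  have hBP : B * P = B := by rw [hBmul, mul_assoc (P * H) P P, hPP]
  have hone : ‖(1 : 𝓗 →L[ℂ] 𝓗)‖ ≤ 1 := by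
    rw [ContinuousLinearMap.one_def]; exact ContinuousLinearMap.norm_id_le
  have hPle : ‖P‖ ≤ 1 := by
    have h2 := CStarRing.norm_star_mul_self (x := P)
    rw [hPsa'.star_eq, hPP] at h2
    nlinarith [norm_nonneg P]
  set K : ℝ := ‖H‖ ^ 2 * Real.exp (|t| * ‖H‖) + ‖B‖ ^ 2 * Real.exp (|t| * ‖B‖) with hKdef
  have hK0 : 0 ≤ K := by positivity
  set C : ℝ := t ^ 2 * K + |t| * ‖H - B‖ with hCdef
  -- skewness of the relevant scalars
  have hskew : ∀ x : ℝ, star (-(Complex.I * (x : ℂ))) = -(-(Complex.I * (x : ℂ))) := by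
    intro x; simp [Complex.ext_iff]
  rw [tendsto_iff_norm_sub_tendsto_zero]
  apply squeeze_zero' (Filter.Eventually.of_forall fun n => norm_nonneg _)
    (g := fun n : ℕ => C / n) _ (tendsto_const_div_atTop_nhds_zero_nat C)
  filter_upwards [Filter.eventually_ge_atTop 1] with n hn
  obtain ⟨m, rfl⟩ : ∃ m, n = m + 1 := ⟨n - 1, by omega⟩
  have hν1 : (1 : ℝ) ≤ ((m + 1 : ℕ) : ℝ) := by exact_mod_cast hn
  have hν0 : (0 : ℝ) < ((m + 1 : ℕ) : ℝ) := lt_of_lt_of_le one_pos hν1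
  have hνne : ((m + 1 : ℕ) : ℝ) ≠ 0 := ne_of_gt hν0
  have hn0 : ((m + 1 : ℕ) : ℂ) ≠ 0 := Nat.cast_ne_zero.mpr (by omega)
  set s : ℂ := -(Complex.I * ((t : ℂ) / ((m + 1 : ℕ) : ℂ))) with hsdef
  set c : ℂ := -(Complex.I * (t : ℂ)) with hcdef
  set X := NormedSpace.exp (s • H) with hXdef
  set Y := NormedSpace.exp (s • B) with hYdef
  have hBmul : B = P * H * P := hBdef
  have hsskew : star s = -s := by
    have hs2 : s = -(Complex.I * (((t / ((m + 1 : ℕ) : ℝ)) : ℝ) : ℂ)) := by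
      rw [hsdef]; push_cast; ring
    rw [hs2]; exact hskew _
  have hsnorm : ‖s‖ = |t| / ((m + 1 : ℕ) : ℝ) := by
    rw [hsdef, norm_neg, norm_mul, Complex.norm_I, one_mul, norm_div,
      Complex.norm_real, Real.norm_eq_abs, Complex.norm_natCast]
  have hXle : ‖X‖ ≤ 1 := zeno_norm_exp_le_one H hHsa s hsskew
  have hYle : ‖Y‖ ≤ 1 := zeno_norm_exp_le_one B hBsa s hsskew
  have hcomm : Commute P (s • B) := by
    unfold Commute SemiconjBy
    rw [mul_smul_comm, smul_mul_assoc, hPB, hBP]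
  have hcommY : Commute P Y := hcomm.exp_right
  have hns : ((m + 1 : ℕ) : ℂ) * s = c := by
    rw [hsdef, hcdef]
    calc ((m + 1 : ℕ) : ℂ) * -(Complex.I * ((t : ℂ) / ((m + 1 : ℕ) : ℂ)))
        = -(Complex.I * ((t : ℂ) / ((m + 1 : ℕ) : ℂ) * ((m + 1 : ℕ) : ℂ))) := by ring
      _ = -(Complex.I * (t : ℂ)) := by rw [div_mul_cancel₀ _ hn0]
  have hYP : (P * Y) ^ (m + 1) = NormedSpace.exp (c • B) * P := by
    letI : NormedAlgebra ℚ (𝓗 →L[ℂ] 𝓗) := NormedAlgebra.restrictScalars ℚ ℂ _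
    rw [hcommY.eq, (hcommY.symm).mul_pow, hYdef, ← NormedSpace.exp_nsmul,
      ← Nat.cast_smul_eq_nsmul ℂ, smul_smul, hns, IsIdempotentElem.pow_succ_eq m hPP]
  -- remainders
  set RX := X - 1 - s • H with hRXdef
  set RY := Y - 1 - s • B with hRYdef
  have htν : |t| / ((m + 1 : ℕ) : ℝ) ≤ |t| := div_le_self (abs_nonneg t) hν1
  have hRXle : ‖RX‖ ≤ (|t| / ((m + 1 : ℕ) : ℝ)) ^ 2 * (‖H‖ ^ 2 * Real.exp (|t| * ‖H‖)) := by
    refine le_trans (zeno_exp_remainder (s • H)) ?_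
    rw [norm_smul, hsnorm, mul_pow, mul_assoc]
    gcongr
  have hRYle : ‖RY‖ ≤ (|t| / ((m + 1 : ℕ) : ℝ)) ^ 2 * (‖B‖ ^ 2 * Real.exp (|t| * ‖B‖)) := by
    refine le_trans (zeno_exp_remainder (s • B)) ?_
    rw [norm_smul, hsnorm, mul_pow, mul_assoc]
    gcongr
  have hXY : X - Y = RX - RY + s • (H - B) := by
    rw [hRXdef, hRYdef, smul_sub]; abel
  have hMid : P * X * P - P * Y * P = P * (RX - RY) * P := by
    have hz : P * (s • (H - B)) * P = 0 := by
      rw [mul_smul_comm, smul_mul_assoc, mul_sub, sub_mul, ← hBmul, hPB, hBP, sub_self,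
        smul_zero]
    calc P * X * P - P * Y * P = P * (X - Y) * P := by rw [mul_sub, sub_mul]
      _ = P * (RX - RY) * P + P * (s • (H - B)) * P := by rw [hXY, mul_add, add_mul]
      _ = P * (RX - RY) * P := by rw [hz, add_zero]
  have hmul11 : ∀ a b : 𝓗 →L[ℂ] 𝓗, ‖a‖ ≤ 1 → ‖b‖ ≤ 1 → ‖a * b‖ ≤ 1 := by
    intro a b ha hb
    calc ‖a * b‖ ≤ ‖a‖ * ‖b‖ := norm_mul_le _ _
      _ ≤ 1 := by nlinarith [norm_nonneg a, norm_nonneg b]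
  have hPXle : ‖P * X‖ ≤ 1 := hmul11 _ _ hPle hXle
  have hPYle : ‖P * Y‖ ≤ 1 := hmul11 _ _ hPle hYle
  have hMXle : ‖P * X * P‖ ≤ 1 := hmul11 _ _ hPXle hPle
  have hMYle : ‖P * Y * P‖ ≤ 1 := hmul11 _ _ hPYle hPle
  have hMd : ‖P * X * P - P * Y * P‖ ≤ (|t| / ((m + 1 : ℕ) : ℝ)) ^ 2 * K := by
    rw [hMid]
    calc ‖P * (RX - RY) * P‖ ≤ ‖P * (RX - RY)‖ * ‖P‖ := norm_mul_le _ _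
      _ ≤ ‖P‖ * ‖RX - RY‖ * ‖P‖ :=
          mul_le_mul_of_nonneg_right (norm_mul_le _ _) (norm_nonneg _)
      _ ≤ 1 * ‖RX - RY‖ * 1 := by
          apply mul_le_mul _ hPle (norm_nonneg _) (by positivity)
          exact mul_le_mul_of_nonneg_right hPle (norm_nonneg _)
      _ = ‖RX - RY‖ := by ring
      _ ≤ ‖RX‖ + ‖RY‖ := norm_sub_le _ _
      _ ≤ (|t| / ((m + 1 : ℕ) : ℝ)) ^ 2 * (‖H‖ ^ 2 * Real.exp (|t| * ‖H‖))
            + (|t| / ((m + 1 : ℕ) : ℝ)) ^ 2 * (‖B‖ ^ 2 * Real.exp (|t| * ‖B‖)) :=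
          add_le_add hRXle hRYle
      _ = (|t| / ((m + 1 : ℕ) : ℝ)) ^ 2 * K := by rw [hKdef]; ring
  have hXYle : ‖X - Y‖ ≤ (|t| / ((m + 1 : ℕ) : ℝ)) ^ 2 * K
      + (|t| / ((m + 1 : ℕ) : ℝ)) * ‖H - B‖ := by
    calc ‖X - Y‖ = ‖RX - RY + s • (H - B)‖ := by rw [hXY]
      _ ≤ ‖RX - RY‖ + ‖s • (H - B)‖ := norm_add_le _ _
      _ ≤ (‖RX‖ + ‖RY‖) + (|t| / ((m + 1 : ℕ) : ℝ)) * ‖H - B‖ := by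
          apply add_le_add (norm_sub_le _ _)
          rw [norm_smul, hsnorm]
      _ ≤ ((|t| / ((m + 1 : ℕ) : ℝ)) ^ 2 * (‖H‖ ^ 2 * Real.exp (|t| * ‖H‖))
            + (|t| / ((m + 1 : ℕ) : ℝ)) ^ 2 * (‖B‖ ^ 2 * Real.exp (|t| * ‖B‖)))
            + (|t| / ((m + 1 : ℕ) : ℝ)) * ‖H - B‖ :=
          add_le_add (add_le_add hRXle hRYle) le_rfl
      _ = (|t| / ((m + 1 : ℕ) : ℝ)) ^ 2 * K + (|t| / ((m + 1 : ℕ) : ℝ)) * ‖H - B‖ := by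
          rw [hKdef]; ring
  have hPXYle : ‖P * (X - Y)‖ ≤ ‖X - Y‖ := by
    calc ‖P * (X - Y)‖ ≤ ‖P‖ * ‖X - Y‖ := norm_mul_le _ _
      _ ≤ 1 * ‖X - Y‖ := mul_le_mul_of_nonneg_right hPle (norm_nonneg _)
      _ = ‖X - Y‖ := one_mul _
  have h1 := zeno_pow_sub_pow hone hMXle hMYle m
  have h2 := zeno_norm_pow_le_one hone hMYle m
  have harith : (m : ℝ) * ((|t| / ((m + 1 : ℕ) : ℝ)) ^ 2 * K)
      + ((|t| / ((m + 1 : ℕ) : ℝ)) ^ 2 * K + (|t| / ((m + 1 : ℕ) : ℝ)) * ‖H - B‖)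
      = C / ((m + 1 : ℕ) : ℝ) := by
    have hm1 : (m : ℝ) = ((m + 1 : ℕ) : ℝ) - 1 := by push_cast; ring
    rw [hm1, hCdef, div_pow, sq_abs]
    field_simp
    ring
  have hdecomp : (P * X) ^ (m + 1) - NormedSpace.exp (c • B) * P
      = ((P * X * P) ^ m - (P * Y * P) ^ m) * (P * X)
        + (P * Y * P) ^ m * (P * (X - Y)) := by
    rw [← hYP, zeno_struct hPP m, zeno_struct hPP m, mul_sub P X Y,
      mul_sub ((P * Y * P) ^ m), sub_mul]
    abel
  show ‖(P * X) ^ (m + 1) - NormedSpace.exp (c • B) * P‖ ≤ C / ((m + 1 : ℕ) : ℝ)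
  rw [hdecomp]
  calc ‖((P * X * P) ^ m - (P * Y * P) ^ m) * (P * X)
        + (P * Y * P) ^ m * (P * (X - Y))‖
      ≤ ‖((P * X * P) ^ m - (P * Y * P) ^ m) * (P * X)‖
        + ‖(P * Y * P) ^ m * (P * (X - Y))‖ := norm_add_le _ _
    _ ≤ ‖(P * X * P) ^ m - (P * Y * P) ^ m‖ * ‖P * X‖
        + ‖(P * Y * P) ^ m‖ * ‖P * (X - Y)‖ :=
        add_le_add (norm_mul_le _ _) (norm_mul_le _ _)
    _ ≤ ((m : ℝ) * ((|t| / ((m + 1 : ℕ) : ℝ)) ^ 2 * K)) * 1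
        + 1 * ((|t| / ((m + 1 : ℕ) : ℝ)) ^ 2 * K
            + (|t| / ((m + 1 : ℕ) : ℝ)) * ‖H - B‖) := by
        apply add_le_add
        · apply mul_le_mul _ hPXle (norm_nonneg _) (by positivity)
          exact le_trans h1 (mul_le_mul_of_nonneg_left hMd (Nat.cast_nonneg m))
        · exact mul_le_mul h2 (le_trans hPXYle hXYle) (norm_nonneg _) zero_le_one
    _ = C / ((m + 1 : ℕ) : ℝ) := by rw [mul_one, one_mul]; exact harith
end

section
/- Let H be an m×m Hermitian complex matrix and let P be an m×m complex matrix with P·P = P and Pᴴ = P (an orthogonal projection matrix). Then for every real t, (P · exp(−(it/n)·H) · P)^n converges, as n → ∞, to exp(−it·(P·H·P)) · P. -/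
open scoped Topology Matrix
open NormedSpace

set_option linter.unusedSectionVars false
set_option maxHeartbeats 400000

section Helpers

variable {𝔸 : Type*} [NormedRing 𝔸] [NormedAlgebra ℂ 𝔸] [CompleteSpace 𝔸] [NormOneClass 𝔸]

lemma zeno_norm_exp_le (x : 𝔸) : ‖exp x‖ ≤ Real.exp ‖x‖ := by
  rw [NormedSpace.exp_eq_tsum ℂ]
  have hsum : Summable fun n : ℕ => ‖x‖ ^ n / (n.factorial : ℝ) :=
    Real.summable_pow_div_factorial ‖x‖
  have hb : ∀ n : ℕ, ‖((n.factorial : ℂ)⁻¹ • x ^ n)‖ ≤ ‖x‖ ^ n / (n.factorial : ℝ) := by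
    intro n
    rw [norm_smul, norm_inv, Complex.norm_natCast, div_eq_inv_mul]
    gcongr
    exact norm_pow_le x n
  have hs2 : Summable fun n : ℕ => ‖((n.factorial : ℂ)⁻¹ • x ^ n)‖ :=
    Summable.of_nonneg_of_le (fun n => norm_nonneg _) hb hsum
  refine (norm_tsum_le_tsum_norm hs2).trans ?_
  refine (Summable.tsum_le_tsum hb hs2 hsum).trans_eq ?_
  rw [Real.exp_eq_exp_ℝ, NormedSpace.exp_eq_tsum_div]

lemma zeno_norm_exp_sub_le (x : 𝔸) :
    ‖exp x - 1 - x‖ ≤ ‖x‖ ^ 2 * Real.exp ‖x‖ := by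
  have hf : Summable fun n : ℕ => (n.factorial : ℂ)⁻¹ • x ^ n :=
    NormedSpace.expSeries_summable' x
  have hf1 : Summable fun n : ℕ => ((n + 1).factorial : ℂ)⁻¹ • x ^ (n + 1) :=
    (summable_nat_add_iff 1).2 hf
  have key : exp x - 1 - x = ∑' n : ℕ, ((n + 2).factorial : ℂ)⁻¹ • x ^ (n + 2) := by
    simp only [NormedSpace.exp_eq_tsum ℂ]
    rw [Summable.tsum_eq_zero_add hf, Summable.tsum_eq_zero_add hf1]
    simp only [pow_zero, pow_one, Nat.factorial_zero, Nat.factorial_one, Nat.cast_one,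
      inv_one, one_smul]
    have h2 : ∀ n : ℕ, n + 1 + 1 = n + 2 := fun n => rfl
    norm_num [h2]
  rw [key]
  have hsum : Summable fun n : ℕ => ‖x‖ ^ 2 * (‖x‖ ^ n / (n.factorial : ℝ)) :=
    (Real.summable_pow_div_factorial ‖x‖).mul_left _
  have hb : ∀ n : ℕ, ‖(((n + 2).factorial : ℂ)⁻¹ • x ^ (n + 2))‖ ≤
      ‖x‖ ^ 2 * (‖x‖ ^ n / (n.factorial : ℝ)) := by
    intro n
    rw [norm_smul, norm_inv, Complex.norm_natCast]
    calc ((n + 2).factorial : ℝ)⁻¹ * ‖x ^ (n + 2)‖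
        ≤ ((n.factorial : ℝ))⁻¹ * ‖x‖ ^ (n + 2) := by
          gcongr
          · omega
          · exact norm_pow_le x _
      _ = ‖x‖ ^ 2 * (‖x‖ ^ n / (n.factorial : ℝ)) := by rw [pow_add]; ring
  have hs2 : Summable fun n : ℕ => ‖(((n + 2).factorial : ℂ)⁻¹ • x ^ (n + 2))‖ :=
    Summable.of_nonneg_of_le (fun n => norm_nonneg _) hb hsum
  refine (norm_tsum_le_tsum_norm hs2).trans ?_
  refine (Summable.tsum_le_tsum hb hs2 hsum).trans_eq ?_
  rw [tsum_mul_left, Real.exp_eq_exp_ℝ, NormedSpace.exp_eq_tsum_div]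

lemma zeno_pow_sub_pow_norm_le (a b : 𝔸) {M : ℝ} (ha : ‖a‖ ≤ M) (hb : ‖b‖ ≤ M) (k : ℕ) :
    ‖a ^ (k + 1) - b ^ (k + 1)‖ ≤ (k + 1) * M ^ k * ‖a - b‖ := by
  have hM : 0 ≤ M := le_trans (norm_nonneg a) ha
  induction k with
  | zero => simp
  | succ k ih =>
      have hsplit : a ^ (k + 2) - b ^ (k + 2)
          = a * (a ^ (k + 1) - b ^ (k + 1)) + (a - b) * b ^ (k + 1) := by
        rw [mul_sub, sub_mul, pow_succ' a (k + 1), pow_succ' b (k + 1)]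
        abel
      calc ‖a ^ (k + 2) - b ^ (k + 2)‖
          ≤ ‖a * (a ^ (k + 1) - b ^ (k + 1))‖ + ‖(a - b) * b ^ (k + 1)‖ := by
            rw [hsplit]; exact norm_add_le _ _
        _ ≤ ‖a‖ * ‖a ^ (k + 1) - b ^ (k + 1)‖ + ‖a - b‖ * ‖b ^ (k + 1)‖ := by
            gcongr <;> exact norm_mul_le _ _
        _ ≤ M * ((k + 1) * M ^ k * ‖a - b‖) + ‖a - b‖ * M ^ (k + 1) := by
            gcongr
            exact (norm_pow_le b _).trans (by gcongr)
        _ = ((k : ℝ) + 1 + 1) * M ^ (k + 1) * ‖a - b‖ := by ring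
        _ = ((k + 1 : ℕ) + 1) * M ^ (k + 1) * ‖a - b‖ := by push_cast; ring

end Helpers

section Aux

open scoped Matrix.Norms.L2Operator

theorem zeno_aux {m : ℕ} (hm : 0 < m)
    (H P : Matrix (Fin m) (Fin m) ℂ)
    (hH : Hᴴ = H)
    (hPproj : P * P = P)
    (hPsa : Pᴴ = P)
    (t : ℝ) :
    Filter.Tendsto
      (fun n : ℕ => (P * NormedSpace.exp ((-(Complex.I * (t / n))) • H) * P) ^ n)
      Filter.atTop
      (𝓝 (NormedSpace.exp ((-(Complex.I * t)) • (P * H * P)) * P)) := by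
  haveI : Nonempty (Fin m) := ⟨⟨0, hm⟩⟩
  set s : ℂ := -(Complex.I * t) with hs
  set K : Matrix (Fin m) (Fin m) ℂ := P * H * P with hK
  have hPK : P * K = K := by simp only [hK, ← mul_assoc, hPproj]
  have hKP : K * P = K := by simp only [hK, mul_assoc, hPproj]
  have hPKP : P * K * P = K := by rw [hPK, hKP]
  have hcomm : Commute P K := hPK.trans hKP.symm
  -- rewrite the function in terms of s
  have hcoef : ∀ n : ℕ, (-(Complex.I * ((t : ℂ) / (n : ℂ)))) = s / n := by
    intro n; rw [hs]; ring
  simp only [hcoef]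
  -- notation
  set A : ℕ → Matrix (Fin m) (Fin m) ℂ := fun n => P * exp ((s / n) • H) * P with hA
  set B : ℕ → Matrix (Fin m) (Fin m) ℂ := fun n => P * exp ((s / n) • K) * P with hB
  set L : Matrix (Fin m) (Fin m) ℂ := exp (s • K) * P with hL
  -- ‖P‖ ≤ 1
  have hP1 : ‖P‖ ≤ 1 := by
    have h := CStarRing.norm_star_mul_self (x := P)
    rw [Matrix.star_eq_conjTranspose, hPsa, hPproj] at h
    nlinarith [norm_nonneg P]
  -- B n ^ n = L for n ≥ 1
  have hBpow : ∀ n : ℕ, 1 ≤ n → B n ^ n = L := by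
    intro n hn
    have hn' : (n : ℂ) ≠ 0 := Nat.cast_ne_zero.2 (by omega)
    have hce : Commute P (exp ((s / n) • K)) := (hcomm.smul_right _).exp_right
    have hBn : B n = exp ((s / n) • K) * P := by
      rw [hB]; dsimp only; rw [hce.eq, mul_assoc, hPproj]
    obtain ⟨k, rfl⟩ : ∃ k, n = k + 1 := ⟨n - 1, by omega⟩
    rw [hBn, (hce.symm).mul_pow, ← Matrix.exp_nsmul,
      IsIdempotentElem.pow_succ_eq k hPproj]
    congr 2
    rw [← Nat.cast_smul_eq_nsmul ℂ, smul_smul]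
    congr 1
    field_simp
  -- constants
  set c1 : ℝ := ‖s‖ * ‖H‖ with hc1def
  set c2 : ℝ := ‖s‖ * ‖K‖ with hc2def
  set c : ℝ := c1 + c2 with hcdef
  have hc1 : 0 ≤ c1 := hc1def ▸ mul_nonneg (norm_nonneg _) (norm_nonneg _)
  have hc2 : 0 ≤ c2 := hc2def ▸ mul_nonneg (norm_nonneg _) (norm_nonneg _)
  have hc : 0 ≤ c := add_nonneg hc1 hc2
  have hc1c : c1 ≤ c := le_add_of_nonneg_right hc2
  have hc2c : c2 ≤ c := le_add_of_nonneg_left hc1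
  -- sandwich bound
  have hsand : ∀ X : Matrix (Fin m) (Fin m) ℂ, ‖P * X * P‖ ≤ ‖X‖ := by
    intro X
    calc ‖P * X * P‖ ≤ ‖P * X‖ * ‖P‖ := norm_mul_le _ _
      _ ≤ (‖P‖ * ‖X‖) * ‖P‖ := by gcongr; exact norm_mul_le _ _
      _ ≤ (1 * ‖X‖) * 1 := by gcongr
      _ = ‖X‖ := by ring
  -- norms of the arguments
  have hx1 : ∀ n : ℕ, ‖(s / n : ℂ) • H‖ = c1 / n := by
    intro n
    rw [norm_smul, norm_div, Complex.norm_natCast, hc1def]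
    ring
  have hx2 : ∀ n : ℕ, ‖(s / n : ℂ) • K‖ = c2 / n := by
    intro n
    rw [norm_smul, norm_div, Complex.norm_natCast, hc2def]
    ring
  have hx1le : ∀ n : ℕ, 1 ≤ n → ‖(s / n : ℂ) • H‖ ≤ c := by
    intro n hn
    rw [hx1 n]
    refine le_trans ?_ hc1c
    rw [div_le_iff₀ (by positivity : (0:ℝ) < n)]
    nlinarith [(Nat.one_le_cast (α := ℝ)).2 hn]
  have hx2le : ∀ n : ℕ, 1 ≤ n → ‖(s / n : ℂ) • K‖ ≤ c := by
    intro n hn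
    rw [hx2 n]
    refine le_trans ?_ hc2c
    rw [div_le_iff₀ (by positivity : (0:ℝ) < n)]
    nlinarith [(Nat.one_le_cast (α := ℝ)).2 hn]
  -- norm bounds on A n and B n
  have hnormA : ∀ n : ℕ, 1 ≤ n → ‖A n‖ ≤ Real.exp (c / n) := by
    intro n hn
    have h1 : ‖(s / n : ℂ) • H‖ ≤ c / n := by
      rw [hx1 n]; gcongr
    calc ‖A n‖ ≤ ‖exp ((s / n : ℂ) • H)‖ := hsand _
      _ ≤ Real.exp ‖(s / n : ℂ) • H‖ := zeno_norm_exp_le _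
      _ ≤ Real.exp (c / n) := Real.exp_le_exp.2 h1
  have hnormB : ∀ n : ℕ, 1 ≤ n → ‖B n‖ ≤ Real.exp (c / n) := by
    intro n hn
    have h1 : ‖(s / n : ℂ) • K‖ ≤ c / n := by
      rw [hx2 n]; gcongr
    calc ‖B n‖ ≤ ‖exp ((s / n : ℂ) • K)‖ := hsand _
      _ ≤ Real.exp ‖(s / n : ℂ) • K‖ := zeno_norm_exp_le _
      _ ≤ Real.exp (c / n) := Real.exp_le_exp.2 h1
  -- difference bound
  set D : ℝ := c1 ^ 2 * Real.exp c + c2 ^ 2 * Real.exp c with hDdef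
  have hD : 0 ≤ D := hDdef ▸ add_nonneg (mul_nonneg (sq_nonneg _) (Real.exp_pos _).le)
    (mul_nonneg (sq_nonneg _) (Real.exp_pos _).le)
  have hdiff : ∀ n : ℕ, 1 ≤ n → ‖A n - B n‖ ≤ D / n ^ 2 := by
    intro n hn
    have hnpos : (0:ℝ) < n := by positivity
    set x1 : Matrix (Fin m) (Fin m) ℂ := (s / n : ℂ) • H with hx1def
    set x2 : Matrix (Fin m) (Fin m) ℂ := (s / n : ℂ) • K with hx2def
    have hPx1P : P * x1 * P = (s / n : ℂ) • K := by
      rw [hx1def, mul_smul_comm, smul_mul_assoc]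
    have hPx2P : P * x2 * P = (s / n : ℂ) • K := by
      rw [hx2def, mul_smul_comm, smul_mul_assoc, hPKP]
    have hAB : A n - B n
        = P * (exp x1 - 1 - x1) * P - P * (exp x2 - 1 - x2) * P := by
      rw [hA, hB]; dsimp only
      simp only [mul_sub, sub_mul, mul_one, one_mul, hPproj, hPx1P, hPx2P]
      abel
    have hE1 : ‖exp x1 - 1 - x1‖ ≤ c1 ^ 2 / n ^ 2 * Real.exp c := by
      refine (zeno_norm_exp_sub_le x1).trans ?_
      have := hx1 n
      rw [← hx1def] at this
      rw [this, div_pow]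
      refine mul_le_mul_of_nonneg_left (Real.exp_le_exp.2 ?_)
        (div_nonneg (sq_nonneg _) (sq_nonneg _))
      rw [← this]; exact hx1le n hn
    have hE2 : ‖exp x2 - 1 - x2‖ ≤ c2 ^ 2 / n ^ 2 * Real.exp c := by
      refine (zeno_norm_exp_sub_le x2).trans ?_
      have := hx2 n
      rw [← hx2def] at this
      rw [this, div_pow]
      refine mul_le_mul_of_nonneg_left (Real.exp_le_exp.2 ?_)
        (div_nonneg (sq_nonneg _) (sq_nonneg _))
      rw [← this]; exact hx2le n hn
    calc ‖A n - B n‖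
        ≤ ‖P * (exp x1 - 1 - x1) * P‖ + ‖P * (exp x2 - 1 - x2) * P‖ := by
          rw [hAB]; exact norm_sub_le _ _
      _ ≤ ‖exp x1 - 1 - x1‖ + ‖exp x2 - 1 - x2‖ := by
          gcongr <;> exact hsand _
      _ ≤ c1 ^ 2 / n ^ 2 * Real.exp c + c2 ^ 2 / n ^ 2 * Real.exp c :=
          add_le_add hE1 hE2
      _ = D / n ^ 2 := by rw [hDdef]; field_simp
  -- main estimate
  set C : ℝ := Real.exp c * D with hCdef
  have hmain : ∀ n : ℕ, 1 ≤ n → ‖A n ^ n - L‖ ≤ C / n := by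
    intro n hn
    have hnpos : (0:ℝ) < n := by positivity
    rw [← hBpow n hn]
    obtain ⟨k, rfl⟩ : ∃ k, n = k + 1 := ⟨n - 1, by omega⟩
    have h1 := zeno_pow_sub_pow_norm_le (A (k + 1)) (B (k + 1))
      (hnormA _ hn) (hnormB _ hn) k
    have hMk : Real.exp (c / (k + 1 : ℕ)) ^ k ≤ Real.exp c := by
      rw [← Real.exp_nat_mul]
      refine Real.exp_le_exp.2 ?_
      have hkpos : (0:ℝ) < (k:ℝ) + 1 := by positivity
      have heq : (k:ℝ) * (c / ((k:ℝ) + 1)) = c * ((k:ℝ) / ((k:ℝ) + 1)) := by ring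
      rw [Nat.cast_add, Nat.cast_one, heq]
      calc c * ((k:ℝ) / ((k:ℝ) + 1)) ≤ c * 1 :=
            mul_le_mul_of_nonneg_left (by rw [div_le_one hkpos]; linarith) hc
        _ = c := mul_one c
    have hk1 : (0:ℝ) ≤ (k:ℝ) + 1 := by positivity
    refine h1.trans ?_
    have step : ((k:ℝ) + 1) * Real.exp (c / (k + 1 : ℕ)) ^ k * ‖A (k + 1) - B (k + 1)‖
        ≤ (((k:ℝ) + 1) * Real.exp c) * (D / ((k + 1 : ℕ) : ℝ) ^ 2) := by
      refine mul_le_mul (mul_le_mul_of_nonneg_left hMk hk1) (hdiff _ hn) (norm_nonneg _) ?_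
      exact mul_nonneg hk1 (Real.exp_pos _).le
    refine step.trans (le_of_eq ?_)
    rw [hCdef]
    have hne : ((k + 1 : ℕ) : ℝ) ≠ 0 := by positivity
    field_simp
    push_cast
    ring
  -- conclusion
  rw [tendsto_iff_norm_sub_tendsto_zero]
  refine squeeze_zero' (Filter.Eventually.of_forall fun n => norm_nonneg _)
    ?_ (tendsto_const_div_atTop_nhds_zero_nat C)
  filter_upwards [Filter.eventually_ge_atTop 1] with n hn
  exact hmain n hn

end Aux

/-- **Zeno product formula for matrices.** For a Hermitian matrix `H` and an orthogonal
projection matrix `P`, `(P e^{-itH/n} P)^n → e^{-it P H P} P` as `n → ∞`. -/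
theorem zeno_product_formula_matrix {m : ℕ}
    (H P : Matrix (Fin m) (Fin m) ℂ)
    (hH : Hᴴ = H)
    (hPproj : P * P = P)
    (hPsa : Pᴴ = P)
    (t : ℝ) :
    Filter.Tendsto
      (fun n : ℕ => (P * NormedSpace.exp ((-(Complex.I * (t / n))) • H) * P) ^ n)
      Filter.atTop
      (𝓝 (NormedSpace.exp ((-(Complex.I * t)) • (P * H * P)) * P)) := by
  rcases Nat.eq_zero_or_pos m with hm | hm
  · subst hm
    haveI : Subsingleton (Matrix (Fin 0) (Fin 0) ℂ) :=
      ⟨fun A B => by ext i j; exact i.elim0⟩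
    exact tendsto_const_nhds.congr fun n => Subsingleton.elim _ _
  · exact zeno_aux hm H P hH hPproj hPsa t
end

section
/- Let H be a bounded self-adjoint operator on a complex Hilbert space 𝓗 and let P be an orthogonal projection on 𝓗. Then (1/t)·‖P ∘ exp(−itH) ∘ P − P ∘ exp(−it·(P∘H∘P)) ∘ P‖ tends to 0 as t → 0. -/
open scoped InnerProductSpace Topology

open NormedSpace in
private lemma zeno_aux_s4 {𝓗 : Type*} [NormedAddCommGroup 𝓗] [InnerProductSpace ℂ 𝓗]
    [CompleteSpace 𝓗] (A : 𝓗 →L[ℂ] 𝓗) :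
    HasDerivAt (fun t : ℝ => exp ((-(Complex.I * t)) • A))
      ((-Complex.I) • A) 0 := by
  have h0 : ∀ t : ℝ, (-(Complex.I * (t : ℂ))) • A = t • ((-Complex.I) • A) := by
    intro t
    rw [← smul_assoc]
    norm_num [Complex.real_smul]
    ring_nf
  have h := hasDerivAt_exp_smul_const (𝕂 := ℝ) ((-Complex.I) • A) (0 : ℝ)
  simp only [zero_smul, exp_zero, one_mul] at h
  simp_rw [h0]
  exact h

/-- The key small-time estimate in the proof of the Zeno product formula:
`t⁻¹ ‖P e^{-itH} P - P e^{-it PHP} P‖ → 0` as `t → 0`. -/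
theorem zeno_small_time_estimate
    {𝓗 : Type*} [NormedAddCommGroup 𝓗] [InnerProductSpace ℂ 𝓗] [CompleteSpace 𝓗]
    (H P : 𝓗 →L[ℂ] 𝓗)
    (hH : ∀ x y : 𝓗, ⟪H x, y⟫_ℂ = ⟪x, H y⟫_ℂ)
    (hPproj : P ∘L P = P)
    (hPsa : ∀ x y : 𝓗, ⟪P x, y⟫_ℂ = ⟪x, P y⟫_ℂ) :
    Filter.Tendsto
      (fun t : ℝ => (1 / t) *
        ‖P ∘L NormedSpace.exp ((-(Complex.I * t)) • H) ∘L P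
          - P ∘L NormedSpace.exp ((-(Complex.I * t)) • (P ∘L H ∘L P)) ∘L P‖)
      (𝓝 0) (𝓝 0) := by
  set g : ℝ → (𝓗 →L[ℂ] 𝓗) := fun t =>
    P ∘L NormedSpace.exp ((-(Complex.I * t)) • H) ∘L P
      - P ∘L NormedSpace.exp ((-(Complex.I * t)) • (P ∘L H ∘L P)) ∘L P with hg
  -- the bilinear "sandwich" map X ↦ P X P is continuous linear
  let Φ : (𝓗 →L[ℂ] 𝓗) →L[ℝ] (𝓗 →L[ℂ] 𝓗) :=
    ((ContinuousLinearMap.compL ℂ 𝓗 𝓗 𝓗 P).comp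
      ((ContinuousLinearMap.compL ℂ 𝓗 𝓗 𝓗).flip P)).restrictScalars ℝ
  have hΦ : ∀ X : 𝓗 →L[ℂ] 𝓗, Φ X = P ∘L X ∘L P := fun X => rfl
  have hderiv : HasDerivAt g 0 0 := by
    have h1 : HasDerivAt (fun t : ℝ => Φ (NormedSpace.exp ((-(Complex.I * t)) • H)))
        (Φ ((-Complex.I) • H)) 0 := (Φ.hasFDerivAt.comp_hasDerivAt 0 (zeno_aux_s4 H))
    have h2 : HasDerivAt
        (fun t : ℝ => Φ (NormedSpace.exp ((-(Complex.I * t)) • (P ∘L H ∘L P))))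
        (Φ ((-Complex.I) • (P ∘L H ∘L P))) 0 :=
      (Φ.hasFDerivAt.comp_hasDerivAt 0 (zeno_aux_s4 (P ∘L H ∘L P)))
    have key : Φ ((-Complex.I) • H) - Φ ((-Complex.I) • (P ∘L H ∘L P)) = 0 := by
      have hPP : ∀ y : 𝓗, P (P y) = P y := fun y => ContinuousLinearMap.ext_iff.mp hPproj y
      rw [hΦ, hΦ]
      ext x
      simp [hPP]
    have := (h1.sub h2)
    rw [key] at this
    exact this
  have hg0 : g 0 = 0 := by
    simp [hg]
  -- g = o(t) at 0
  have hlo : (fun t : ℝ => ‖g t‖) =o[𝓝 0] (fun t : ℝ => t) := by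
    have := hderiv.hasFDerivAt.isLittleO
    simp only [hg0, map_smul, sub_zero, ContinuousLinearMap.zero_apply, smul_zero] at this
    simpa using this.norm_left
  have := (Asymptotics.isLittleO_iff_tendsto (fun t (ht : t = 0) => by
      simp [ht, hg0])).mp hlo
  refine this.congr fun t => by ring
end

section
/- Let m₁, m₂, a₁, a₂ be positive real numbers and c a real number. Then the integral ∫_ℝ exp(−(√(p²+m₁)·a₁ + √(p²+m₂)·a₂)) / (√(p²+m₁)·√(p²+m₂)) · exp(i·p·c) dp converges absolutely and its modulus is at most π·(m₁·m₂)^{−1/4} · exp(−(√m₁·a₁ + √m₂·a₂)/√2). -/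
open MeasureTheory

/-- Auxiliary: `∫ (x² + μ)⁻¹ = π / √μ` for `μ > 0`. -/
theorem overlap_aux_integral_inv_sq_add (μ : ℝ) (hμ : 0 < μ) :
    (∫ x : ℝ, (x ^ 2 + μ)⁻¹) = Real.pi / Real.sqrt μ := by
  set s := Real.sqrt μ with hs
  have hs0 : 0 < s := Real.sqrt_pos.mpr hμ
  have hsq : s ^ 2 = μ := Real.sq_sqrt hμ.le
  have hkey : ∀ x : ℝ, (x ^ 2 + μ)⁻¹ = μ⁻¹ * (1 + (x / s) ^ 2)⁻¹ := by
    intro x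
    rw [div_pow, hsq, ← mul_inv]
    congr 1
    field_simp
    ring
  simp_rw [hkey]
  rw [integral_const_mul, Measure.integral_comp_div (fun x => (1 + x ^ 2)⁻¹) s,
    integral_univ_inv_one_add_sq, abs_of_pos hs0, smul_eq_mul]
  rw [← hsq]
  field_simp

/-- Auxiliary: integrability of `x ↦ (x² + μ)⁻¹` for `μ > 0`. -/
theorem overlap_aux_integrable_inv_sq_add (μ : ℝ) (hμ : 0 < μ) :
    Integrable (fun x : ℝ => (x ^ 2 + μ)⁻¹) := by
  set s := Real.sqrt μ with hs
  have hs0 : 0 < s := Real.sqrt_pos.mpr hμ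
  have hsq : s ^ 2 = μ := Real.sq_sqrt hμ.le
  have hkey : ∀ x : ℝ, (x ^ 2 + μ)⁻¹ = μ⁻¹ * (1 + (x / s) ^ 2)⁻¹ := by
    intro x
    rw [div_pow, hsq, ← mul_inv]
    congr 1
    field_simp
    ring
  simp_rw [hkey]
  exact (integrable_inv_one_add_sq.comp_div hs0.ne').const_mul _

/-- The momentum-representation integral for the boundary overlap of two point-interaction
eigenfunctions: it converges absolutely and is exponentially small in `a₁`, `a₂`. -/
theorem overlap_integral_bound
    (m₁ m₂ a₁ a₂ : ℝ) (hm₁ : 0 < m₁) (hm₂ : 0 < m₂) (ha₁ : 0 < a₁) (ha₂ : 0 < a₂)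
    (c : ℝ) :
    Integrable (fun p : ℝ =>
      ((Real.exp (-(Real.sqrt (p ^ 2 + m₁) * a₁ + Real.sqrt (p ^ 2 + m₂) * a₂)) /
          (Real.sqrt (p ^ 2 + m₁) * Real.sqrt (p ^ 2 + m₂)) : ℝ) : ℂ) *
        Complex.exp (Complex.I * p * c)) ∧
    ‖∫ p : ℝ,
      ((Real.exp (-(Real.sqrt (p ^ 2 + m₁) * a₁ + Real.sqrt (p ^ 2 + m₂) * a₂)) /
          (Real.sqrt (p ^ 2 + m₁) * Real.sqrt (p ^ 2 + m₂)) : ℝ) : ℂ) *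
        Complex.exp (Complex.I * p * c)‖
      ≤ Real.pi * (m₁ * m₂) ^ (-(1 / 4 : ℝ)) *
          Real.exp (-(Real.sqrt m₁ * a₁ + Real.sqrt m₂ * a₂) / Real.sqrt 2) := by
  set f : ℝ → ℂ := fun p =>
      ((Real.exp (-(Real.sqrt (p ^ 2 + m₁) * a₁ + Real.sqrt (p ^ 2 + m₂) * a₂)) /
          (Real.sqrt (p ^ 2 + m₁) * Real.sqrt (p ^ 2 + m₂)) : ℝ) : ℂ) *
        Complex.exp (Complex.I * p * c) with hf
  set μ : ℝ := Real.sqrt (m₁ * m₂) with hμdef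
  have hμ : 0 < μ := Real.sqrt_pos.mpr (mul_pos hm₁ hm₂)
  set E : ℝ := Real.exp (-(Real.sqrt m₁ * a₁ + Real.sqrt m₂ * a₂) / Real.sqrt 2) with hE
  have hE0 : 0 ≤ E := Real.exp_nonneg _
  -- positivity of the square roots
  have h1 : ∀ p : ℝ, (0:ℝ) < Real.sqrt (p ^ 2 + m₁) := fun p =>
    Real.sqrt_pos.mpr (by positivity)
  have h2 : ∀ p : ℝ, (0:ℝ) < Real.sqrt (p ^ 2 + m₂) := fun p =>
    Real.sqrt_pos.mpr (by positivity)
  -- the pointwise norm of f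
  have hnorm : ∀ p : ℝ, ‖f p‖ =
      Real.exp (-(Real.sqrt (p ^ 2 + m₁) * a₁ + Real.sqrt (p ^ 2 + m₂) * a₂)) /
        (Real.sqrt (p ^ 2 + m₁) * Real.sqrt (p ^ 2 + m₂)) := by
    intro p
    rw [hf]
    simp only [norm_mul, Complex.norm_real, Complex.norm_exp]
    have hre : (Complex.I * (p : ℂ) * (c : ℂ)).re = 0 := by simp
    rw [hre, Real.exp_zero, mul_one, Real.norm_eq_abs, abs_of_nonneg]
    positivity
  -- pointwise domination
  have hdom : ∀ p : ℝ, ‖f p‖ ≤ E * (p ^ 2 + μ)⁻¹ := by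
    intro p
    rw [hnorm p]
    have hden : (p ^ 2 + μ) ≤ Real.sqrt (p ^ 2 + m₁) * Real.sqrt (p ^ 2 + m₂) := by
      rw [← Real.sqrt_mul (by positivity)]
      have hge : (p ^ 2 + μ) ^ 2 ≤ (p ^ 2 + m₁) * (p ^ 2 + m₂) := by
        have hμsq : μ ^ 2 = m₁ * m₂ := Real.sq_sqrt (by positivity)
        have hamgm : 2 * μ ≤ m₁ + m₂ := by
          have := two_mul_le_add_sq (Real.sqrt m₁) (Real.sqrt m₂)
          rw [Real.sq_sqrt hm₁.le, Real.sq_sqrt hm₂.le] at this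
          calc 2 * μ = 2 * (Real.sqrt m₁ * Real.sqrt m₂) := by
                rw [hμdef, Real.sqrt_mul hm₁.le]
            _ ≤ m₁ + m₂ := by linarith
        nlinarith [sq_nonneg p, hμ.le]
      calc (p ^ 2 + μ) = Real.sqrt ((p ^ 2 + μ) ^ 2) := by
            rw [Real.sqrt_sq (by positivity)]
        _ ≤ Real.sqrt ((p ^ 2 + m₁) * (p ^ 2 + m₂)) := Real.sqrt_le_sqrt hge
    have hexp : Real.exp (-(Real.sqrt (p ^ 2 + m₁) * a₁ + Real.sqrt (p ^ 2 + m₂) * a₂))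
        ≤ E := by
      rw [hE]
      apply Real.exp_le_exp.mpr
      have hs1 : Real.sqrt m₁ ≤ Real.sqrt (p ^ 2 + m₁) :=
        Real.sqrt_le_sqrt (by nlinarith [sq_nonneg p])
      have hs2 : Real.sqrt m₂ ≤ Real.sqrt (p ^ 2 + m₂) :=
        Real.sqrt_le_sqrt (by nlinarith [sq_nonneg p])
      have hS : 0 ≤ Real.sqrt m₁ * a₁ + Real.sqrt m₂ * a₂ := by positivity
      have h2' : (1:ℝ) ≤ Real.sqrt 2 := by
        rw [show (1:ℝ) = Real.sqrt 1 from (Real.sqrt_one).symm]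
        exact Real.sqrt_le_sqrt (by norm_num)
      have hdiv : (Real.sqrt m₁ * a₁ + Real.sqrt m₂ * a₂) / Real.sqrt 2
          ≤ Real.sqrt m₁ * a₁ + Real.sqrt m₂ * a₂ :=
        div_le_self hS h2'
      have : Real.sqrt m₁ * a₁ + Real.sqrt m₂ * a₂
          ≤ Real.sqrt (p ^ 2 + m₁) * a₁ + Real.sqrt (p ^ 2 + m₂) * a₂ := by
        gcongr
      rw [neg_div]
      linarith
    calc Real.exp (-(Real.sqrt (p ^ 2 + m₁) * a₁ + Real.sqrt (p ^ 2 + m₂) * a₂)) /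
          (Real.sqrt (p ^ 2 + m₁) * Real.sqrt (p ^ 2 + m₂))
        ≤ E / (Real.sqrt (p ^ 2 + m₁) * Real.sqrt (p ^ 2 + m₂)) := by
          have := mul_pos (h1 p) (h2 p)
          gcongr
      _ ≤ E / (p ^ 2 + μ) := by
          have : (0:ℝ) < p ^ 2 + μ := by positivity
          gcongr
      _ = E * (p ^ 2 + μ)⁻¹ := div_eq_mul_inv _ _
  -- the dominating function is integrable
  have hgint : Integrable (fun p : ℝ => E * (p ^ 2 + μ)⁻¹) :=
    (overlap_aux_integrable_inv_sq_add μ hμ).const_mul E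
  -- f is continuous, hence a.e. strongly measurable
  have hcont : Continuous f := by
    rw [hf]
    have hc1 : Continuous fun p : ℝ => Real.sqrt (p ^ 2 + m₁) :=
      ((continuous_pow 2).add continuous_const).sqrt
    have hc2 : Continuous fun p : ℝ => Real.sqrt (p ^ 2 + m₂) :=
      ((continuous_pow 2).add continuous_const).sqrt
    apply Continuous.mul
    · apply Complex.continuous_ofReal.comp
      apply Continuous.div
      · exact Real.continuous_exp.comp
          ((hc1.mul continuous_const).add (hc2.mul continuous_const)).neg
      · exact hc1.mul hc2
      · intro p
        exact (mul_pos (h1 p) (h2 p)).ne'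
    · exact Complex.continuous_exp.comp
        ((continuous_const.mul Complex.continuous_ofReal).mul continuous_const)
  -- integrability of f
  have hfint : Integrable f := by
    refine hgint.mono' hcont.aestronglyMeasurable ?_
    exact Filter.Eventually.of_forall hdom
  refine ⟨hfint, ?_⟩
  -- bound the integral
  have hb1 : ‖∫ p, f p‖ ≤ ∫ p, ‖f p‖ := norm_integral_le_integral_norm f
  have hb2 : (∫ p, ‖f p‖) ≤ ∫ p, E * (p ^ 2 + μ)⁻¹ :=
    integral_mono hfint.norm hgint hdom
  have hval : (∫ p : ℝ, E * (p ^ 2 + μ)⁻¹) =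
      Real.pi * (m₁ * m₂) ^ (-(1 / 4 : ℝ)) * E := by
    rw [integral_const_mul, overlap_aux_integral_inv_sq_add μ hμ]
    have hrpow : Real.sqrt μ = (m₁ * m₂) ^ ((1 / 4 : ℝ)) := by
      rw [hμdef, Real.sqrt_eq_rpow, Real.sqrt_eq_rpow,
        ← Real.rpow_mul (by positivity : (0:ℝ) ≤ m₁ * m₂)]
      norm_num
    rw [hrpow, div_eq_mul_inv, ← Real.rpow_neg (by positivity)]
    ring
  calc ‖∫ p, f p‖ ≤ ∫ p, ‖f p‖ := hb1
    _ ≤ ∫ p, E * (p ^ 2 + μ)⁻¹ := hb2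
    _ = Real.pi * (m₁ * m₂) ^ (-(1 / 4 : ℝ)) * E := hval
end

section
/- Let A be a complex Banach algebra, p ∈ A an idempotent (p·p = p) and x ∈ A with p·x = x and x·p = x. Then (p + (1/n)·x)^n converges in norm, as n → ∞, to exp(x)·p. -/
open scoped Topology
open Finset Filter

private lemma exp_approx_bound {A : Type*} [NormedRing A] [NormedAlgebra ℂ A] [CompleteSpace A]
    (x : A) (n : ℕ) (hn : 0 < n) :
    ‖NormedSpace.exp x - (1 + ((n : ℂ))⁻¹ • x) ^ n‖
      ≤ Real.exp ‖x‖ - (1 + ‖x‖ / n) ^ n := by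
  set t := ‖x‖ with ht
  have hnR : (0:ℝ) < n := by exact_mod_cast hn
  have hs : Summable (fun k : ℕ => ((k.factorial : ℂ))⁻¹ • x ^ k) :=
    NormedSpace.expSeries_summable' (𝕂 := ℂ) x
  have hsn : Summable (fun k : ℕ => ‖((k.factorial : ℂ))⁻¹ • x ^ k‖) :=
    NormedSpace.norm_expSeries_summable' (𝕂 := ℂ) x
  have hsr : Summable (fun k : ℕ => t ^ k / k.factorial) :=
    Real.summable_pow_div_factorial t
  have hexp : NormedSpace.exp x = ∑ k ∈ range (n+1), ((k.factorial : ℂ))⁻¹ • x ^ k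
      + ∑' k : ℕ, (((k + (n+1)).factorial : ℂ))⁻¹ • x ^ (k + (n+1)) := by
    rw [NormedSpace.exp_eq_tsum ℂ]
    exact (hs.sum_add_tsum_nat_add (n+1)).symm
  have hexpr : Real.exp t = ∑ k ∈ range (n+1), t ^ k / k.factorial
      + ∑' k : ℕ, t ^ (k + (n+1)) / (k + (n+1)).factorial := by
    rw [Real.exp_eq_exp_ℝ, NormedSpace.exp_eq_tsum_div]
    exact (hsr.sum_add_tsum_nat_add (n+1)).symm
  have hpow : (1 + ((n : ℂ))⁻¹ • x) ^ n
      = ∑ k ∈ range (n+1), ((n.choose k : ℂ) * ((n : ℂ))⁻¹ ^ k) • x ^ k := by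
    rw [add_comm, (Commute.one_right (((n : ℂ))⁻¹ • x)).add_pow]
    refine Finset.sum_congr rfl fun k hk => ?_
    rw [one_pow, mul_one, smul_pow, smul_mul_assoc, (Nat.commute_cast (x ^ k) (n.choose k)).eq,
      ← nsmul_eq_mul, ← Nat.cast_smul_eq_nsmul ℂ, smul_smul, mul_comm]
  have hpowr : (1 + t / n) ^ n = ∑ k ∈ range (n+1), (n.choose k : ℝ) * (t / n) ^ k := by
    rw [add_comm, add_pow]
    refine Finset.sum_congr rfl fun k hk => ?_
    rw [one_pow, mul_one, mul_comm]
  have key : NormedSpace.exp x - (1 + ((n : ℂ))⁻¹ • x) ^ n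
      = ∑ k ∈ range (n+1),
          (((k.factorial : ℂ))⁻¹ - (n.choose k : ℂ) * ((n : ℂ))⁻¹ ^ k) • x ^ k
        + ∑' k : ℕ, (((k + (n+1)).factorial : ℂ))⁻¹ • x ^ (k + (n+1)) := by
    rw [hexp, hpow, add_sub_right_comm, ← Finset.sum_sub_distrib]
    simp only [sub_smul]
  rw [key, hexpr, hpowr]
  have htail : ‖∑' k : ℕ, (((k + (n+1)).factorial : ℂ))⁻¹ • x ^ (k + (n+1))‖
      ≤ ∑' k : ℕ, t ^ (k + (n+1)) / (k + (n+1)).factorial := by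
    have hsn' : Summable (fun k : ℕ => ‖(((k + (n+1)).factorial : ℂ))⁻¹ • x ^ (k + (n+1))‖) :=
      (summable_nat_add_iff (f := fun k : ℕ => ‖((k.factorial : ℂ))⁻¹ • x ^ k‖) (n+1)).2 hsn
    have hsr' : Summable (fun k : ℕ => t ^ (k + (n+1)) / (k + (n+1)).factorial) :=
      (summable_nat_add_iff (f := fun k : ℕ => t ^ k / k.factorial) (n+1)).2 hsr
    refine (norm_tsum_le_tsum_norm hsn').trans ?_
    refine hsn'.tsum_le_tsum (fun k => ?_) hsr'
    rw [norm_smul]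
    have h1 : ‖(((k + (n+1)).factorial : ℂ))⁻¹‖ = ((k + (n+1)).factorial : ℝ)⁻¹ := by
      rw [norm_inv]
      norm_num
    rw [h1, div_eq_inv_mul]
    exact mul_le_mul_of_nonneg_left (norm_pow_le' x (by omega)) (by positivity)
  have hsum : ‖∑ k ∈ range (n+1),
        (((k.factorial : ℂ))⁻¹ - (n.choose k : ℂ) * ((n : ℂ))⁻¹ ^ k) • x ^ k‖
      ≤ ∑ k ∈ range (n+1), (t ^ k / k.factorial - (n.choose k : ℝ) * (t / n) ^ k) := by
    refine (norm_sum_le _ _).trans (Finset.sum_le_sum fun k hk => ?_)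
    have hk' : k ≤ n := by simpa using Nat.lt_succ_iff.mp (Finset.mem_range.mp hk)
    have hco : ((k.factorial : ℂ))⁻¹ - (n.choose k : ℂ) * ((n : ℂ))⁻¹ ^ k
        = ((((k.factorial : ℝ))⁻¹ - (n.choose k : ℝ) * ((n : ℝ))⁻¹ ^ k : ℝ) : ℂ) := by
      push_cast
      ring
    have hnonneg : (0:ℝ) ≤ ((k.factorial : ℝ))⁻¹ - (n.choose k : ℝ) * ((n : ℝ))⁻¹ ^ k := by
      have := Nat.choose_le_pow_div (α := ℝ) k n
      rw [sub_nonneg]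
      calc (n.choose k : ℝ) * ((n : ℝ))⁻¹ ^ k
          ≤ ((n : ℝ) ^ k / k.factorial) * ((n : ℝ))⁻¹ ^ k := by
            exact mul_le_mul_of_nonneg_right this (by positivity)
        _ = ((k.factorial : ℝ))⁻¹ := by
            rw [inv_pow]
            field_simp
    rw [hco]
    rcases Nat.eq_zero_or_pos k with rfl | hkpos
    · simp
    · rw [norm_smul, Complex.norm_real, Real.norm_eq_abs, abs_of_nonneg hnonneg]
      have hx : ‖x ^ k‖ ≤ t ^ k := norm_pow_le' x hkpos
      calc (((k.factorial : ℝ))⁻¹ - (n.choose k : ℝ) * ((n : ℝ))⁻¹ ^ k) * ‖x ^ k‖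
          ≤ (((k.factorial : ℝ))⁻¹ - (n.choose k : ℝ) * ((n : ℝ))⁻¹ ^ k) * t ^ k :=
            mul_le_mul_of_nonneg_left hx hnonneg
        _ = t ^ k / k.factorial - (n.choose k : ℝ) * (t / n) ^ k := by
            rw [div_pow]
            ring
  calc ‖∑ k ∈ range (n+1),
        (((k.factorial : ℂ))⁻¹ - (n.choose k : ℂ) * ((n : ℂ))⁻¹ ^ k) • x ^ k
      + ∑' k : ℕ, (((k + (n+1)).factorial : ℂ))⁻¹ • x ^ (k + (n+1))‖
      ≤ ‖∑ k ∈ range (n+1),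
        (((k.factorial : ℂ))⁻¹ - (n.choose k : ℂ) * ((n : ℂ))⁻¹ ^ k) • x ^ k‖
      + ‖∑' k : ℕ, (((k + (n+1)).factorial : ℂ))⁻¹ • x ^ (k + (n+1))‖ := norm_add_le _ _
    _ ≤ ∑ k ∈ range (n+1), (t ^ k / k.factorial - (n.choose k : ℝ) * (t / n) ^ k)
      + ∑' k : ℕ, t ^ (k + (n+1)) / (k + (n+1)).factorial := add_le_add hsum htail
    _ = ∑ k ∈ range (n+1), t ^ k / k.factorial
      + ∑' k : ℕ, t ^ (k + (n+1)) / (k + (n+1)).factorial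
      - ∑ k ∈ range (n+1), (n.choose k : ℝ) * (t / n) ^ k := by
        rw [Finset.sum_sub_distrib]
        ring

private lemma idem_pow_eq {A : Type*} [NormedRing A] [NormedAlgebra ℂ A]
    (p x : A) (hp : p * p = p) (hpx : p * x = x) (hxp : x * p = x) (c : ℂ) :
    ∀ n : ℕ, 1 ≤ n → (p + c • x) ^ n = (1 + c • x) ^ n * p := by
  intro n hn
  induction n with
  | zero => omega
  | succ m ih =>
    rcases Nat.eq_or_lt_of_le hn with h | h
    · simp [← h, add_mul, mul_smul_comm, hxp]
    · have hm : 1 ≤ m := by omega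
      have key : p * (p + c • x) = (1 + c • x) * p := by
        simp [mul_add, add_mul, hp, hpx, mul_smul_comm, smul_mul_assoc, hxp]
      rw [pow_succ, ih hm, mul_assoc, key, ← mul_assoc, ← pow_succ]

/-- In a complex Banach algebra, if `p` is idempotent and `p x = x = x p`, then
`(p + x/n)^n → exp(x) p` in norm as `n → ∞`. -/
theorem idempotent_exp_limit
    {A : Type*} [NormedRing A] [NormedAlgebra ℂ A] [CompleteSpace A]
    (p x : A) (hp : p * p = p) (hpx : p * x = x) (hxp : x * p = x) :
    Filter.Tendsto (fun n : ℕ => (p + ((n : ℂ))⁻¹ • x) ^ n) Filter.atTop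
      (𝓝 (NormedSpace.exp x * p)) := by
  have h1 : Filter.Tendsto (fun n : ℕ => (1 + ((n : ℂ))⁻¹ • x) ^ n) Filter.atTop
      (𝓝 (NormedSpace.exp x)) := by
    rw [tendsto_iff_norm_sub_tendsto_zero]
    have hreal : Filter.Tendsto (fun n : ℕ => Real.exp ‖x‖ - (1 + ‖x‖ / n) ^ n)
        Filter.atTop (𝓝 0) := by
      have := Real.tendsto_one_add_div_pow_exp ‖x‖
      simpa using (tendsto_const_nhds (x := Real.exp ‖x‖) (f := Filter.atTop)).sub this
    refine squeeze_zero' (Filter.Eventually.of_forall fun n => norm_nonneg _) ?_ hreal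
    filter_upwards [Filter.eventually_ge_atTop 1] with n hn
    rw [norm_sub_rev]
    exact exp_approx_bound x n hn
  have h2 := h1.mul_const p
  refine h2.congr' ?_
  filter_upwards [Filter.eventually_ge_atTop 1] with n hn
  exact (idem_pow_eq p x hp hpx hxp _ n hn).symm
end
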